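/- Let p, q be odd integers with p, q ≥ 3, let r ≥ 4 be an even integer, and let s be an integer. Consider the group π with generators x, y, z and relators: (zx)^{(p−1)/2} z (zx)^{(1−p)/2} · ((yx)^{−(q+1)/2} y (yx)^{(q+1)/2})⁻¹; (yz⁻¹)^{−r/2} y (yz⁻¹)^{r/2} · ((yx)^{(1−q)/2} x (yx)^{(q−1)/2})⁻¹; (yz⁻¹)^{−r/2} z (yz⁻¹)^{r/2} · ((zx)^{(p+1)/2} x (zx)^{−(p+1)/2})⁻¹; and x^s·l, where l = x^{−2(p+q)}(yx)^{(q−1)/2}(yz⁻¹)^{−r/2}(yx)^{(q+1)/2}(zx)^{(p−1)/2}(yz⁻¹)^{r/2}(zx)^{(p+1)/2}. Then the quotient of π by the normal closure of the set {(yz⁻¹)^{r/2}, yx⁻¹, (zx)^p} is isomorphic to the group with presentation ⟨y, z ∣ (yz⁻¹)^{r/2}, (zy)^p, (zy)^{(p+1)/2} y (zy)^{−(p+1)/2} z⁻¹, y^{s−2p}⟩. -/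

import Mathlib

/-- Relators of the Wirtinger presentation of the fundamental group of the s-Dehn filling of
the (p,q,−r) pretzel knot complement, with generators x, y, z indexed by 0, 1, 2 in `Fin 3`. -/
def filledWirtingerRels (p q r s : ℤ) : Set (FreeGroup (Fin 3)) :=
  letI x : FreeGroup (Fin 3) := FreeGroup.of 0
  letI y : FreeGroup (Fin 3) := FreeGroup.of 1
  letI z : FreeGroup (Fin 3) := FreeGroup.of 2
  letI l : FreeGroup (Fin 3) :=
    x ^ (-2 * (p + q)) * (y * x) ^ ((q - 1) / 2) * (y * z⁻¹) ^ (-(r / 2)) *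
      (y * x) ^ ((q + 1) / 2) * (z * x) ^ ((p - 1) / 2) * (y * z⁻¹) ^ (r / 2) *
      (z * x) ^ ((p + 1) / 2)
  {(z * x) ^ ((p - 1) / 2) * z * (z * x) ^ ((1 - p) / 2) *
      ((y * x) ^ (-((q + 1) / 2)) * y * (y * x) ^ ((q + 1) / 2))⁻¹,
    (y * z⁻¹) ^ (-(r / 2)) * y * (y * z⁻¹) ^ (r / 2) *
      ((y * x) ^ ((1 - q) / 2) * x * (y * x) ^ ((q - 1) / 2))⁻¹,
    (y * z⁻¹) ^ (-(r / 2)) * z * (y * z⁻¹) ^ (r / 2) *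
      ((z * x) ^ ((p + 1) / 2) * x * (z * x) ^ (-((p + 1) / 2)))⁻¹,
    x ^ s * l}

/-- Relators of the factor group
⟨y, z ∣ (yz⁻¹)^(r/2), (zy)^p, (zy)^((p+1)/2) y (zy)^(−(p+1)/2) z⁻¹, y^(s−2p)⟩,
with y, z the generators indexed by 0, 1 in `Fin 2`. -/
def factorRels (p r s : ℤ) : Set (FreeGroup (Fin 2)) :=
  letI y : FreeGroup (Fin 2) := FreeGroup.of 0
  letI z : FreeGroup (Fin 2) := FreeGroup.of 1
  {(y * z⁻¹) ^ (r / 2), (z * y) ^ p,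
    (z * y) ^ ((p + 1) / 2) * y * (z * y) ^ (-((p + 1) / 2)) * z⁻¹, y ^ (s - 2 * p)}

private lemma two_zpow {G : Type*} [Group G] (Y : G) (e : ℤ) : (Y * Y) ^ e = Y ^ (2 * e) := by
  rw [show Y * Y = Y ^ (2 : ℤ) by rw [zpow_two], ← zpow_mul]

private lemma lemG1 {G : Type*} [Group G] (Y Z : G) (k n : ℤ)
    (h2 : (Z * Y) ^ (2 * k + 1) = 1)
    (h3 : (Z * Y) ^ (k + 1) * Y * (Z * Y) ^ (-(k + 1)) * Z⁻¹ = 1) :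
    (Z * Y) ^ k * Z * (Z * Y) ^ (-k) * ((Y * Y) ^ (-(n + 1)) * Y * (Y * Y) ^ (n + 1))⁻¹ = 1 := by
  have hZ : (Z * Y) ^ (k + 1) * Y * (Z * Y) ^ (-(k + 1)) = Z := mul_inv_eq_one.mp h3
  rw [two_zpow, two_zpow, show Y ^ (2 * -(n + 1)) * Y * Y ^ (2 * (n + 1)) = Y by group]
  set a := Z * Y with ha
  rw [← hZ]
  trans a ^ (2 * k + 1) * Y * (a ^ (2 * k + 1))⁻¹ * Y⁻¹
  · group
  · rw [h2]; group

private lemma lemG2 {G : Type*} [Group G] (Y Z : G) (n m : ℤ)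
    (h1 : (Y * Z⁻¹) ^ m = 1) :
    (Y * Z⁻¹) ^ (-m) * Y * (Y * Z⁻¹) ^ m * ((Y * Y) ^ (-n) * Y * (Y * Y) ^ n)⁻¹ = 1 := by
  rw [zpow_neg, h1, two_zpow, two_zpow]
  group

private lemma lemG3 {G : Type*} [Group G] (Y Z : G) (k m : ℤ)
    (h1 : (Y * Z⁻¹) ^ m = 1)
    (h3 : (Z * Y) ^ (k + 1) * Y * (Z * Y) ^ (-(k + 1)) * Z⁻¹ = 1) :
    (Y * Z⁻¹) ^ (-m) * Z * (Y * Z⁻¹) ^ m *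
      ((Z * Y) ^ (k + 1) * Y * (Z * Y) ^ (-(k + 1)))⁻¹ = 1 := by
  have hZ : (Z * Y) ^ (k + 1) * Y * (Z * Y) ^ (-(k + 1)) = Z := mul_inv_eq_one.mp h3
  rw [zpow_neg, h1, hZ]
  group

private lemma lemG4 {G : Type*} [Group G] (X Y Z : G) (k n m p q s : ℤ)
    (hp : p = 2 * k + 1) (hq : q = 2 * n + 1) (hxy : Y = X)
    (h1 : (Y * Z⁻¹) ^ m = 1)
    (h2 : (Z * X) ^ p = 1)
    (h4 : X ^ (s - 2 * p) = 1) :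
    X ^ s * (X ^ (-2 * (p + q)) * (Y * X) ^ n * (Y * Z⁻¹) ^ (-m) *
      (Y * X) ^ (n + 1) * (Z * X) ^ k * (Y * Z⁻¹) ^ m * (Z * X) ^ (k + 1)) = 1 := by
  subst hxy hp hq
  rw [zpow_neg, h1, two_zpow, two_zpow]
  trans Y ^ (s - 2 * (2 * k + 1)) * (Z * Y) ^ (2 * k + 1)
  · group
  · rw [h2, h4, mul_one]

private lemma lemF3 {G : Type*} [Group G] (X Y Z : G) (k m : ℤ)
    (h1 : (Y * Z⁻¹) ^ m = 1) (hxy : Y = X)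
    (h3 : (Y * Z⁻¹) ^ (-m) * Z * (Y * Z⁻¹) ^ m *
      ((Z * X) ^ (k + 1) * X * (Z * X) ^ (-(k + 1)))⁻¹ = 1) :
    (Z * Y) ^ (k + 1) * Y * (Z * Y) ^ (-(k + 1)) * Z⁻¹ = 1 := by
  subst hxy
  rw [zpow_neg, h1] at h3
  simp only [inv_one, one_mul, mul_one] at h3
  exact mul_inv_eq_one.mpr (mul_inv_eq_one.mp h3).symm

private lemma lemF4 {G : Type*} [Group G] (X Y Z : G) (k n m p q s : ℤ)
    (hp : p = 2 * k + 1) (hq : q = 2 * n + 1) (hxy : Y = X)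
    (h1 : (Y * Z⁻¹) ^ m = 1)
    (h3 : (Z * X) ^ p = 1)
    (h4 : X ^ s * (X ^ (-2 * (p + q)) * (Y * X) ^ n * (Y * Z⁻¹) ^ (-m) *
      (Y * X) ^ (n + 1) * (Z * X) ^ k * (Y * Z⁻¹) ^ m * (Z * X) ^ (k + 1)) = 1) :
    Y ^ (s - 2 * p) = 1 := by
  subst hxy hp hq
  rw [zpow_neg, h1, two_zpow, two_zpow] at h4
  calc Y ^ (s - 2 * (2 * k + 1))
      = (Y ^ s * (Y ^ (-2 * (2 * k + 1 + (2 * n + 1))) * Y ^ (2 * n) * 1⁻¹ *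
          Y ^ (2 * (n + 1)) * (Z * Y) ^ k * 1 * (Z * Y) ^ (k + 1))) *
        ((Z * Y) ^ (2 * k + 1))⁻¹ := by group
    _ = 1 := by rw [h4, h3]; group

set_option maxHeartbeats 2000000 in
theorem factor_group_of_filled_wirtinger (p q r s : ℤ)
    (hpodd : Odd p) (hqodd : Odd q) (hp : 3 ≤ p) (hq : 3 ≤ q)
    (hreven : Even r) (hr : 4 ≤ r) :
    letI x : PresentedGroup (filledWirtingerRels p q r s) := PresentedGroup.of 0
    letI y : PresentedGroup (filledWirtingerRels p q r s) := PresentedGroup.of 1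
    letI z : PresentedGroup (filledWirtingerRels p q r s) := PresentedGroup.of 2
    Nonempty
      ((PresentedGroup (filledWirtingerRels p q r s) ⧸
          Subgroup.normalClosure {(y * z⁻¹) ^ (r / 2), y * x⁻¹, (z * x) ^ p}) ≃*
        PresentedGroup (factorRels p r s)) := by
  obtain ⟨k, hk⟩ := hpodd
  obtain ⟨n, hn⟩ := hqodd
  obtain ⟨m, hm⟩ := hreven
  have dr : r / 2 = m := by omega
  have dp1 : (p - 1) / 2 = k := by omega
  have dp2 : (1 - p) / 2 = -k := by omega
  have dp3 : (p + 1) / 2 = k + 1 := by omega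
  have dq1 : (q - 1) / 2 = n := by omega
  have dq2 : (1 - q) / 2 = -n := by omega
  have dq3 : (q + 1) / 2 = n + 1 := by omega
  -- the target presented group T
  set mkT : FreeGroup (Fin 2) →* PresentedGroup (factorRels p r s) :=
    PresentedGroup.mk (factorRels p r s) with hmkT
  have keyT : ∀ w ∈ factorRels p r s, mkT w = 1 := fun w hw =>
    (QuotientGroup.eq_one_iff _).mpr (Subgroup.subset_normalClosure hw)
  have hT1 := keyT _ (Set.mem_insert _ _)
  have hT2 := keyT _ (Set.mem_insert_of_mem _ (Set.mem_insert _ _))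
  have hT3 := keyT _ (Set.mem_insert_of_mem _ (Set.mem_insert_of_mem _ (Set.mem_insert _ _)))
  have hT4 := keyT _ (Set.mem_insert_of_mem _ (Set.mem_insert_of_mem _
    (Set.mem_insert_of_mem _ rfl)))
  simp only [map_mul, map_zpow, map_inv] at hT1 hT2 hT3 hT4
  simp only [dr] at hT1
  simp only [dp3] at hT3
  set YT := mkT (FreeGroup.of 0) with hYT
  set ZT := mkT (FreeGroup.of 1) with hZT
  -- the map from the Wirtinger presented group to T
  have hfrels : ∀ w ∈ filledWirtingerRels p q r s, FreeGroup.lift ![YT, YT, ZT] w = 1 := by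
    intro w hw
    simp only [filledWirtingerRels, Set.mem_insert_iff, Set.mem_singleton_iff] at hw
    obtain rfl | rfl | rfl | rfl := hw
    · simp only [map_mul, map_zpow, map_inv, FreeGroup.lift_apply_of, Matrix.cons_val_zero,
        Matrix.cons_val_one, Matrix.head_cons, Matrix.cons_val_two, Matrix.tail_cons]
      rw [dp1, dp2, dq3]
      exact lemG1 YT ZT k n (by rw [show (2 * k + 1 : ℤ) = p from hk.symm]; exact hT2) hT3
    · simp only [map_mul, map_zpow, map_inv, FreeGroup.lift_apply_of, Matrix.cons_val_zero,
        Matrix.cons_val_one, Matrix.head_cons, Matrix.cons_val_two, Matrix.tail_cons]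
      rw [dr, dq1, dq2]
      exact lemG2 YT ZT n m hT1
    · simp only [map_mul, map_zpow, map_inv, FreeGroup.lift_apply_of, Matrix.cons_val_zero,
        Matrix.cons_val_one, Matrix.head_cons, Matrix.cons_val_two, Matrix.tail_cons]
      rw [dr, dp3]
      exact lemG3 YT ZT k m hT1 hT3
    · simp only [map_mul, map_zpow, map_inv, FreeGroup.lift_apply_of, Matrix.cons_val_zero,
        Matrix.cons_val_one, Matrix.head_cons, Matrix.cons_val_two, Matrix.tail_cons]
      rw [dr, dq1, dq3, dp1, dp3]
      exact lemG4 YT YT ZT k n m p q s hk hn rfl hT1 hT2 hT4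
  set homT : PresentedGroup (filledWirtingerRels p q r s) →* PresentedGroup (factorRels p r s) :=
    PresentedGroup.toGroup hfrels with hhomT
  -- the quotient group Q
  set NS : Subgroup (PresentedGroup (filledWirtingerRels p q r s)) :=
    Subgroup.normalClosure
      {(PresentedGroup.of 1 * (PresentedGroup.of 2)⁻¹) ^ (r / 2),
        PresentedGroup.of 1 * (PresentedGroup.of 0)⁻¹,
        (PresentedGroup.of 2 * PresentedGroup.of 0) ^ p} with hNS
  set π : FreeGroup (Fin 3) →*
      (PresentedGroup (filledWirtingerRels p q r s) ⧸ NS) :=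
    (QuotientGroup.mk' NS).comp (PresentedGroup.mk (filledWirtingerRels p q r s)) with hπ
  have keyQ : ∀ w ∈ filledWirtingerRels p q r s, π w = 1 := by
    intro w hw
    have : PresentedGroup.mk (filledWirtingerRels p q r s) w = 1 :=
      (QuotientGroup.eq_one_iff _).mpr (Subgroup.subset_normalClosure hw)
    rw [MonoidHom.comp_apply, this, map_one]
  have hQ3 := keyQ _ (Set.mem_insert_of_mem _ (Set.mem_insert_of_mem _ (Set.mem_insert _ _)))
  have hQ4 := keyQ _ (Set.mem_insert_of_mem _ (Set.mem_insert_of_mem _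
    (Set.mem_insert_of_mem _ rfl)))
  simp only [map_mul, map_zpow, map_inv] at hQ3 hQ4
  simp only [dr, dp1, dp3, dq1, dq3] at hQ3 hQ4
  have keyS : ∀ g ∈ ({(PresentedGroup.of 1 * (PresentedGroup.of 2)⁻¹) ^ (r / 2),
        PresentedGroup.of 1 * (PresentedGroup.of 0)⁻¹,
        (PresentedGroup.of 2 * PresentedGroup.of 0) ^ p} :
        Set (PresentedGroup (filledWirtingerRels p q r s))),
      QuotientGroup.mk' NS g = 1 := fun g hg =>
    (QuotientGroup.eq_one_iff _).mpr (Subgroup.subset_normalClosure hg)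
  have hS1 := keyS _ (Set.mem_insert _ _)
  have hS2 := keyS _ (Set.mem_insert_of_mem _ (Set.mem_insert _ _))
  have hS3 := keyS _ (Set.mem_insert_of_mem _ (Set.mem_insert_of_mem _ rfl))
  simp only [map_mul, map_zpow, map_inv] at hS1 hS2 hS3
  simp only [dr] at hS1
  have e0 : (QuotientGroup.mk' NS) (PresentedGroup.of 0) = π (FreeGroup.of 0) := rfl
  have e1 : (QuotientGroup.mk' NS) (PresentedGroup.of 1) = π (FreeGroup.of 1) := rfl
  have e2 : (QuotientGroup.mk' NS) (PresentedGroup.of 2) = π (FreeGroup.of 2) := rfl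
  rw [e1, e2] at hS1
  rw [e1, e0] at hS2
  rw [e2, e0] at hS3
  set XQ := π (FreeGroup.of 0) with hXQ
  set YQ := π (FreeGroup.of 1) with hYQ
  set ZQ := π (FreeGroup.of 2) with hZQ
  have hS2' : YQ = XQ := mul_inv_eq_one.mp hS2
  -- the map from T to Q
  have hgrels : ∀ w ∈ factorRels p r s, FreeGroup.lift ![YQ, ZQ] w = 1 := by
    intro w hw
    simp only [factorRels, Set.mem_insert_iff, Set.mem_singleton_iff] at hw
    obtain rfl | rfl | rfl | rfl := hw
    · simp only [map_mul, map_zpow, map_inv, FreeGroup.lift_apply_of, Matrix.cons_val_zero,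
        Matrix.cons_val_one, Matrix.head_cons, dr]
      exact hS1
    · simp only [map_mul, map_zpow, map_inv, FreeGroup.lift_apply_of, Matrix.cons_val_zero,
        Matrix.cons_val_one, Matrix.head_cons]
      rw [hS2']
      exact hS3
    · simp only [map_mul, map_zpow, map_inv, FreeGroup.lift_apply_of, Matrix.cons_val_zero,
        Matrix.cons_val_one, Matrix.head_cons, dp3]
      exact lemF3 XQ YQ ZQ k m hS1 hS2' hQ3
    · simp only [map_mul, map_zpow, map_inv, FreeGroup.lift_apply_of, Matrix.cons_val_zero,
        Matrix.cons_val_one, Matrix.head_cons]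
      exact lemF4 XQ YQ ZQ k n m p q s hk hn hS2' hS1 hS3 hQ4
  set ψ : PresentedGroup (factorRels p r s) →*
      (PresentedGroup (filledWirtingerRels p q r s) ⧸ NS) :=
    PresentedGroup.toGroup hgrels with hψ
  have hker : NS ≤ homT.ker := by
    rw [hNS]
    refine Subgroup.normalClosure_le_normal ?_
    intro g hg
    rw [SetLike.mem_coe, MonoidHom.mem_ker]
    obtain rfl | rfl | rfl := hg
    · simp only [map_mul, map_zpow, map_inv, hhomT, PresentedGroup.toGroup.of,
        Matrix.cons_val_zero, Matrix.cons_val_one, Matrix.head_cons, Matrix.cons_val_two,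
        Matrix.tail_cons, dr]
      exact hT1
    · simp only [map_mul, map_zpow, map_inv, hhomT, PresentedGroup.toGroup.of,
        Matrix.cons_val_zero, Matrix.cons_val_one, Matrix.head_cons, Matrix.cons_val_two,
        Matrix.tail_cons]
      group
    · simp only [map_mul, map_zpow, map_inv, hhomT, PresentedGroup.toGroup.of,
        Matrix.cons_val_zero, Matrix.cons_val_one, Matrix.head_cons, Matrix.cons_val_two,
        Matrix.tail_cons]
      exact hT2
  set φ : (PresentedGroup (filledWirtingerRels p q r s) ⧸ NS) →*
      PresentedGroup (factorRels p r s) :=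
    QuotientGroup.lift NS homT hker with hφ
  have liftmk : ∀ a, φ ((QuotientGroup.mk' NS) a) = homT a := fun a => rfl
  have psi_of : ∀ i : Fin 2, ψ (PresentedGroup.of i) = ![YQ, ZQ] i := fun i =>
    PresentedGroup.toGroup.of hgrels
  have homT_of : ∀ i : Fin 3, homT (PresentedGroup.of i) = ![YT, YT, ZT] i := fun i =>
    PresentedGroup.toGroup.of hfrels
  refine ⟨MonoidHom.toMulEquiv φ ψ ?_ ?_⟩
  · apply QuotientGroup.monoidHom_ext
    apply PresentedGroup.ext
    intro i
    fin_cases i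
    · show ψ (φ ((QuotientGroup.mk' NS) (PresentedGroup.of 0))) =
        (QuotientGroup.mk' NS) (PresentedGroup.of 0)
      rw [liftmk, homT_of, e0]
      show ψ (PresentedGroup.of 0) = XQ
      rw [psi_of]
      exact hS2'
    · show ψ (φ ((QuotientGroup.mk' NS) (PresentedGroup.of 1))) =
        (QuotientGroup.mk' NS) (PresentedGroup.of 1)
      rw [liftmk, homT_of, e1]
      show ψ (PresentedGroup.of 0) = YQ
      rw [psi_of]
      rfl
    · show ψ (φ ((QuotientGroup.mk' NS) (PresentedGroup.of 2))) =
        (QuotientGroup.mk' NS) (PresentedGroup.of 2)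
      rw [liftmk, homT_of, e2]
      show ψ (PresentedGroup.of 1) = ZQ
      rw [psi_of]
      rfl
  · apply PresentedGroup.ext
    intro i
    fin_cases i
    · show φ (ψ (PresentedGroup.of 0)) = PresentedGroup.of 0
      rw [psi_of]
      show φ ((QuotientGroup.mk' NS) (PresentedGroup.of 1)) = PresentedGroup.of 0
      rw [liftmk, homT_of]
      rfl
    · show φ (ψ (PresentedGroup.of 1)) = PresentedGroup.of 1
      rw [psi_of]
      show φ ((QuotientGroup.mk' NS) (PresentedGroup.of 2)) = PresentedGroup.of 1
      rw [liftmk, homT_of]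
      rfl
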